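/- arXiv:2102.12079 — 3 statements merged into one kernel-verified Lean document; each statement's English description precedes it below -/
import Mathlib

section
/- For every integer j ≥ 1 and every g ≥ 0, k_j(g) ≤ (1+j)·log(1+j) / ((g+1+j)·log(g+1+j)), where k_j(g) = 1 - log(g+1)/log(g+1+j). -/
open MeasureTheory Real Set

/-- The sequence `k_j(g) = 1 - log(g+1)/log(g+1+j)`. -/
noncomputable def kfun (j : ℕ) (g : ℝ) : ℝ :=
  1 - Real.log (g + 1) / Real.log (g + 1 + (j : ℝ))

lemma kfun_aux_anti (b : ℝ) (hb : 1 ≤ b) :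
    AntitoneOn (fun a : ℝ => (a + b) * (Real.log (a + b) - Real.log a)) (Ici 1) := by
  have hb0 : 0 < b := lt_of_lt_of_le one_pos hb
  have hd : ∀ x : ℝ, 1 < x → HasDerivAt (fun a : ℝ => (a + b) * (Real.log (a + b) - Real.log a))
      (1 * (Real.log (x+b) - Real.log x) + (x+b) * (1/(x+b) - 1/x)) x := by
    intro x hx1
    have hx0 : 0 < x := by linarith
    have hxb : 0 < x + b := by linarith
    have h1 : HasDerivAt (fun a : ℝ => a + b) 1 x := (hasDerivAt_id x).add_const b
    have h2 : HasDerivAt (fun a : ℝ => Real.log (a + b)) (1/(x+b)) x := by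
      have := (Real.hasDerivAt_log hxb.ne').comp x h1
      exact this.congr_deriv (by simp)
    have h3 : HasDerivAt (fun a : ℝ => Real.log a) (1/x) x := by
      simpa [one_div] using Real.hasDerivAt_log hx0.ne'
    exact h1.mul (h2.sub h3)
  apply antitoneOn_of_deriv_nonpos (convex_Ici 1)
  · apply ContinuousOn.mul (by fun_prop)
    apply ContinuousOn.sub
    · apply ContinuousOn.log (by fun_prop)
      intro x hx
      simp only [mem_Ici] at hx
      positivity
    · apply ContinuousOn.log (by fun_prop)
      intro x hx
      simp only [mem_Ici] at hx
      positivity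
  · intro x hx
    rw [interior_Ici] at hx
    exact ((hd x hx).differentiableAt).differentiableWithinAt
  · intro x hx
    rw [interior_Ici] at hx
    have hx1 : (1:ℝ) < x := hx
    have hx0 : 0 < x := by linarith
    have hxb : 0 < x + b := by linarith
    rw [(hd x hx1).deriv]
    have hlog : Real.log ((x+b)/x) ≤ (x+b)/x - 1 :=
      Real.log_le_sub_one_of_pos (by positivity)
    rw [Real.log_div hxb.ne' hx0.ne'] at hlog
    have he : (x+b) * (1/(x+b) - 1/x) = 1 - (x+b)/x := by
      field_simp
    rw [he, one_mul]
    linarith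

/-- For `j ≥ 1` and `g ≥ 0`,
`k_j(g) ≤ (1+j) log(1+j) / ((g+1+j) log(g+1+j))`. -/
theorem kfun_upper_bound (j : ℕ) (hj : 1 ≤ j) (g : ℝ) (hg : 0 ≤ g) :
    kfun j g ≤ (1 + (j : ℝ)) * Real.log (1 + (j : ℝ)) /
      ((g + 1 + (j : ℝ)) * Real.log (g + 1 + (j : ℝ))) := by
  set b : ℝ := (j : ℝ) with hbdef
  have hb : 1 ≤ b := by rw [hbdef]; exact_mod_cast hj
  have ha : (1:ℝ) ≤ g + 1 := by linarith
  have hL : 0 < Real.log (g + 1 + b) := Real.log_pos (by linarith)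
  have hkey : (g + 1 + b) * (Real.log (g + 1 + b) - Real.log (g + 1)) ≤
      (1 + b) * Real.log (1 + b) := by
    have := kfun_aux_anti b hb (self_mem_Ici (a := (1:ℝ))) (mem_Ici.mpr ha) ha
    simpa [Real.log_one] using this
  rw [kfun, one_sub_div hL.ne']
  rw [div_le_div_iff₀ hL (by positivity)]
  nlinarith [hL, hkey]
end

section
/- Let a ≥ -2 and b > -1, and let π(g) = (g+1)^{-(a+2)}(g/(g+1))^b. Then for every integer j ≥ 1, ∫_0^∞ π(g) k_j(g)² dg ≤ 1/(b+1) + max(1, 2^{-b})·(1+j). -/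
open MeasureTheory Real Set

/-- The prior `π(g) = (g+1)^{-(a+2)} (g/(g+1))^b`. -/
noncomputable def priorPi (a b g : ℝ) : ℝ :=
  (g + 1) ^ (-(a + 2)) * (g / (g + 1)) ^ b

section Aux

open Filter Topology

lemma kfun_nonneg (j : ℕ) {g : ℝ} (hg : 0 < g) (hj : 1 ≤ j) : 0 ≤ kfun j g := by
  have hJ : (1:ℝ) ≤ (j:ℝ) := by exact_mod_cast hj
  have hl : 0 < Real.log (g + 1 + (j:ℝ)) := Real.log_pos (by linarith)
  have hmono : Real.log (g+1) ≤ Real.log (g+1+(j:ℝ)) :=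
    Real.log_le_log (by linarith) (by linarith)
  have : Real.log (g+1) / Real.log (g+1+(j:ℝ)) ≤ 1 := (div_le_one hl).2 hmono
  simp only [kfun]; linarith

lemma kfun_le (j : ℕ) {g : ℝ} (hg : 0 < g) (hj : 1 ≤ j) :
    kfun j g ≤ (1 + (j:ℝ)) / (g + 1 + (j:ℝ)) := by
  have hJ : (1:ℝ) ≤ (j:ℝ) := by exact_mod_cast hj
  have hx0 : (0:ℝ) < g + 1 := by linarith
  have hxJ0 : (0:ℝ) < g + 1 + (j:ℝ) := by linarith
  have hl : 0 < Real.log (g + 1 + (j:ℝ)) := Real.log_pos (by linarith)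
  set s : ℝ := Real.log (g+1+(j:ℝ)) - Real.log (g+1) with hs
  have hA : s ≤ (j:ℝ) / (g+1) := by
    have h1 : Real.log ((g+1+(j:ℝ))/(g+1)) ≤ (g+1+(j:ℝ))/(g+1) - 1 :=
      Real.log_le_sub_one_of_pos (by positivity)
    have h2 : Real.log ((g+1+(j:ℝ))/(g+1)) = s := by
      rw [Real.log_div (by linarith) (by linarith)]
    have h3 : (g+1+(j:ℝ))/(g+1) - 1 = (j:ℝ)/(g+1) := by field_simp; ring
    rw [h2, h3] at h1; exact h1
  have hB : g/(g+1) ≤ Real.log (g+1) := by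
    have h1 : Real.log ((g+1)⁻¹) ≤ (g+1)⁻¹ - 1 :=
      Real.log_le_sub_one_of_pos (by positivity)
    rw [Real.log_inv] at h1
    have : g/(g+1) = 1 - (g+1)⁻¹ := by field_simp; ring
    linarith [this]
  have hC : g * s ≤ (1+(j:ℝ)) * Real.log (g+1) := by
    have h1 : g * s ≤ g * ((j:ℝ)/(g+1)) :=
      mul_le_mul_of_nonneg_left hA hg.le
    have h2 : g * ((j:ℝ)/(g+1)) = (j:ℝ) * (g/(g+1)) := by ring
    have h3 : (j:ℝ) * (g/(g+1)) ≤ (j:ℝ) * Real.log (g+1) :=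
      mul_le_mul_of_nonneg_left hB (by linarith)
    have h4 : 0 < Real.log (g+1) := Real.log_pos (by linarith)
    nlinarith
  have hD : (g+1+(j:ℝ)) * s ≤ (1+(j:ℝ)) * Real.log (g+1+(j:ℝ)) := by
    have he : (1+(j:ℝ)) * Real.log (g+1+(j:ℝ))
        = (1+(j:ℝ)) * Real.log (g+1) + (1+(j:ℝ)) * s := by rw [hs]; ring
    nlinarith
  have hk : kfun j g = s / Real.log (g+1+(j:ℝ)) := by
    rw [kfun, hs]; field_simp
  rw [hk, div_le_div_iff₀ hl hxJ0]
  nlinarith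

lemma prior_nonneg (a b : ℝ) {g : ℝ} (hg : 0 < g) : 0 ≤ priorPi a b g :=
  mul_nonneg (Real.rpow_nonneg (by linarith) _) (Real.rpow_nonneg (by positivity) _)

lemma prior_le_small (a b : ℝ) (ha : -2 ≤ a) (hb : -1 < b) {g : ℝ} (hg : 0 < g) :
    priorPi a b g ≤ g ^ b + g ^ (b+1) := by
  have hx0 : (0:ℝ) < g + 1 := by linarith
  have h1 : priorPi a b g = g ^ b * (g+1) ^ (-(a+2) + -b) := by
    rw [priorPi, Real.div_rpow hg.le hx0.le, Real.rpow_add hx0, Real.rpow_neg hx0.le b,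
      div_eq_mul_inv]
    ring
  rw [h1]
  have h2 : (g+1) ^ (-(a+2) + -b) ≤ (g+1) ^ (1:ℝ) :=
    Real.rpow_le_rpow_of_exponent_le (by linarith) (by linarith)
  rw [Real.rpow_one] at h2
  have h3 : g ^ b * (g+1) ^ (-(a+2) + -b) ≤ g ^ b * (g+1) :=
    mul_le_mul_of_nonneg_left h2 (Real.rpow_nonneg hg.le b)
  have h4 : g ^ b * (g+1) = g ^ b + g ^ (b+1) := by
    rw [Real.rpow_add_one hg.ne' b]; ring
  linarith

lemma prior_le_M (a b : ℝ) (ha : -2 ≤ a) {g : ℝ} (hg : 1 ≤ g) :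
    priorPi a b g ≤ max 1 ((2:ℝ) ^ (-b)) := by
  have hg0 : (0:ℝ) < g := by linarith
  have hx0 : (0:ℝ) < g + 1 := by linarith
  have h1 : (g+1) ^ (-(a+2)) ≤ 1 :=
    Real.rpow_le_one_of_one_le_of_nonpos (by linarith) (by linarith)
  have hu0 : 0 < g/(g+1) := by positivity
  have hu1 : g/(g+1) ≤ 1 := by rw [div_le_one hx0]; linarith
  have h2 : (g/(g+1)) ^ b ≤ max 1 ((2:ℝ) ^ (-b)) := by
    rcases le_or_gt 0 b with hb0 | hb0
    · exact le_trans (Real.rpow_le_one hu0.le hu1 hb0) (le_max_left _ _)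
    · have hhalf : (1:ℝ)/2 ≤ g/(g+1) := by
        rw [div_le_div_iff₀ (by norm_num) hx0]; linarith
      have h3 : (g/(g+1)) ^ b ≤ ((1:ℝ)/2) ^ b :=
        Real.rpow_le_rpow_of_nonpos (by norm_num) hhalf hb0.le
      have h4 : ((1:ℝ)/2) ^ b = (2:ℝ) ^ (-b) := by
        rw [one_div, Real.inv_rpow (by norm_num), ← Real.rpow_neg (by norm_num)]
      rw [h4] at h3
      exact le_trans h3 (le_max_right _ _)
  calc priorPi a b g ≤ 1 * ((g/(g+1)) ^ b) := by
        rw [priorPi]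
        exact mul_le_mul_of_nonneg_right h1 (Real.rpow_nonneg hu0.le b)
    _ = (g/(g+1)) ^ b := one_mul _
    _ ≤ _ := h2

lemma contOn (a b : ℝ) (j : ℕ) (hj : 1 ≤ j) :
    ContinuousOn (fun g => priorPi a b g * kfun j g ^ 2) (Ioi (0:ℝ)) := by
  have hJ : (1:ℝ) ≤ (j:ℝ) := by exact_mod_cast hj
  intro x hx
  have hx0 : (0:ℝ) < x := hx
  apply ContinuousAt.continuousWithinAt
  have c1 : ContinuousAt (fun g : ℝ => (g + 1) ^ (-(a+2))) x := by
    exact (Real.continuousAt_rpow_const _ _ (Or.inl (by linarith))).comp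
      ((continuous_id.add continuous_const).continuousAt)
  have c2 : ContinuousAt (fun g : ℝ => (g / (g + 1)) ^ b) x := by
    have hdiv : ContinuousAt (fun g : ℝ => g / (g + 1)) x :=
      ContinuousAt.div (continuous_id.continuousAt)
        ((continuous_id.add continuous_const).continuousAt) (by positivity)
    exact (Real.continuousAt_rpow_const _ _ (Or.inl (by positivity))).comp hdiv
  have c3 : ContinuousAt (fun g : ℝ => kfun j g) x := by
    unfold kfun
    apply ContinuousAt.sub continuousAt_const
    apply ContinuousAt.div
    · exact (Real.continuousAt_log (by linarith)).comp
        ((continuous_id.add continuous_const).continuousAt)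
    · exact (Real.continuousAt_log (by linarith)).comp
        (((continuous_id.add continuous_const).add continuous_const).continuousAt)
    · exact ne_of_gt (Real.log_pos (by linarith))
  exact ((c1.mul c2).mul (c3.pow 2))

lemma small_int (b : ℝ) (hb : -1 < b) :
    IntegrableOn (fun g : ℝ => g ^ b + g ^ (b+1)) (Ioc (0:ℝ) 1) ∧
    ∫ g in Ioc (0:ℝ) 1, (g ^ b + g ^ (b+1)) = 1/(b+1) + 1/(b+2) := by
  have i1 : IntervalIntegrable (fun x:ℝ => x ^ b) volume 0 1 :=
    intervalIntegral.intervalIntegrable_rpow' hb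
  have i2 : IntervalIntegrable (fun x:ℝ => x ^ (b+1)) volume 0 1 :=
    intervalIntegral.intervalIntegrable_rpow' (by linarith)
  have hadd := i1.add i2
  rw [intervalIntegrable_iff_integrableOn_Ioc_of_le zero_le_one] at hadd
  refine ⟨hadd, ?_⟩
  rw [← intervalIntegral.integral_of_le zero_le_one,
    intervalIntegral.integral_add i1 i2, integral_rpow (Or.inl hb),
    integral_rpow (Or.inl (by linarith : (-1:ℝ) < b + 1))]
  rw [Real.one_rpow, Real.one_rpow, Real.zero_rpow (by linarith : b + 1 ≠ 0),
    Real.zero_rpow (by linarith : b + 1 + 1 ≠ 0)]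
  norm_num
  ring_nf

lemma tail_int (j : ℕ) (hj : 1 ≤ j) :
    IntegrableOn (fun g : ℝ => ((g + 1 + (j:ℝ))^2)⁻¹) (Ioi (1:ℝ)) ∧
    ∫ g in Ioi (1:ℝ), ((g + 1 + (j:ℝ))^2)⁻¹ = (2 + (j:ℝ))⁻¹ := by
  have hJ : (1:ℝ) ≤ (j:ℝ) := by exact_mod_cast hj
  have hder : ∀ x ∈ Ici (1:ℝ), HasDerivAt (fun g : ℝ => -(g + 1 + (j:ℝ))⁻¹)
      (((x + 1 + (j:ℝ))^2)⁻¹) x := by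
    intro x hx
    have hx1 : (1:ℝ) ≤ x := hx
    have hne : x + 1 + (j:ℝ) ≠ 0 := by positivity
    have h0 : HasDerivAt (fun g : ℝ => g + 1 + (j:ℝ)) 1 x :=
      ((hasDerivAt_id x).add_const 1).add_const _
    have h1 := (h0.inv hne).neg
    have h2 : -(-1 / (x + 1 + (j:ℝ)) ^ 2) = ((x + 1 + (j:ℝ))^2)⁻¹ := by
      rw [neg_div, neg_neg, one_div]
    rw [h2] at h1
    exact h1
  have hcont : ContinuousWithinAt (fun g : ℝ => -(g + 1 + (j:ℝ))⁻¹) (Ici (1:ℝ)) 1 :=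
    (hder 1 self_mem_Ici).continuousAt.continuousWithinAt
  have htend : Tendsto (fun g : ℝ => -(g + 1 + (j:ℝ))⁻¹) atTop (𝓝 0) := by
    have h1 : Tendsto (fun g : ℝ => g + 1 + (j:ℝ)) atTop atTop :=
      tendsto_atTop_add_const_right _ _ (tendsto_atTop_add_const_right _ _ tendsto_id)
    have h2 := (tendsto_inv_atTop_zero.comp h1).neg
    simpa using h2
  have hpos : ∀ x ∈ Ioi (1:ℝ), 0 ≤ ((x + 1 + (j:ℝ))^2)⁻¹ := by
    intro x hx; positivity
  have hint : IntegrableOn (fun g : ℝ => ((g + 1 + (j:ℝ))^2)⁻¹) (Ioi (1:ℝ)) :=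
    integrableOn_Ioi_deriv_of_nonneg hcont (fun x hx => hder x (Ioi_subset_Ici_self hx)) hpos htend
  refine ⟨hint, ?_⟩
  rw [integral_Ioi_of_hasDerivAt_of_tendsto hcont (fun x hx => hder x (Ioi_subset_Ici_self hx)) hint htend]
  norm_num

end Aux

/-- For `a ≥ -2`, `b > -1` and `j ≥ 1`,
`∫_0^∞ π(g) k_j(g)² dg ≤ 1/(b+1) + max(1, 2^{-b}) (1+j)`. -/
theorem integral_priorPi_kfun_sq (a b : ℝ) (ha : -2 ≤ a) (hb : -1 < b)
    (j : ℕ) (hj : 1 ≤ j) :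
    (∫ g in Ioi (0 : ℝ), priorPi a b g * (kfun j g) ^ 2)
      ≤ 1 / (b + 1) + max 1 ((2 : ℝ) ^ (-b)) * (1 + (j : ℝ)) := by
  have hJ : (1:ℝ) ≤ (j:ℝ) := by exact_mod_cast hj
  set J : ℝ := (j:ℝ) with hJdef
  set M : ℝ := max 1 ((2:ℝ) ^ (-b)) with hMdef
  have hM1 : (1:ℝ) ≤ M := le_max_left _ _
  have hM0 : (0:ℝ) ≤ M := by linarith
  set f : ℝ → ℝ := fun g => priorPi a b g * kfun j g ^ 2 with hfdef
  have hfnn : ∀ x : ℝ, 0 < x → 0 ≤ f x := fun x hx =>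
    mul_nonneg (prior_nonneg a b hx) (sq_nonneg _)
  have bound1 : ∀ x ∈ Ioc (0:ℝ) 1, f x ≤ x ^ b + x ^ (b+1) := by
    intro x hx
    have hx0 : 0 < x := hx.1
    have hk1 : kfun j x ≤ 1 := by
      have h1 := kfun_le j hx0 hj
      have h2 : (1 + J) / (x + 1 + J) ≤ 1 := by
        rw [div_le_one (by linarith)]; linarith
      linarith
    have hksq : kfun j x ^ 2 ≤ 1 := by
      nlinarith [kfun_nonneg j hx0 hj]
    calc f x ≤ priorPi a b x * 1 :=
          mul_le_mul_of_nonneg_left hksq (prior_nonneg a b hx0)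
      _ = priorPi a b x := mul_one _
      _ ≤ x ^ b + x ^ (b+1) := prior_le_small a b ha hb hx0
  have bound2 : ∀ x ∈ Ioi (1:ℝ), f x ≤ M * (1+J)^2 * ((x + 1 + J)^2)⁻¹ := by
    intro x hx
    have hx1 : (1:ℝ) < x := hx
    have hx0 : (0:ℝ) < x := by linarith
    have hknn := kfun_nonneg j hx0 hj
    have hkle := kfun_le j hx0 hj
    have hksq : kfun j x ^ 2 ≤ ((1+J)/(x+1+J))^2 := by
      apply pow_le_pow_left₀ hknn hkle
    have h3 : ((1+J)/(x+1+J))^2 = (1+J)^2 * ((x+1+J)^2)⁻¹ := by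
      rw [div_pow, div_eq_mul_inv]
    calc f x ≤ M * ((1+J)/(x+1+J))^2 :=
          mul_le_mul (prior_le_M a b ha hx1.le) hksq (sq_nonneg _) hM0
      _ = M * (1+J)^2 * ((x+1+J)^2)⁻¹ := by rw [h3, mul_assoc]
  have hsm1 : AEStronglyMeasurable f (volume.restrict (Ioc (0:ℝ) 1)) :=
    ((contOn a b j hj).mono Ioc_subset_Ioi_self).aestronglyMeasurable measurableSet_Ioc
  have hsm2 : AEStronglyMeasurable f (volume.restrict (Ioi (1:ℝ))) :=
    ((contOn a b j hj).mono (Ioi_subset_Ioi zero_le_one)).aestronglyMeasurable measurableSet_Ioi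
  have hf1 : IntegrableOn f (Ioc (0:ℝ) 1) := by
    apply Integrable.mono' (small_int b hb).1 hsm1
    rw [ae_restrict_iff' measurableSet_Ioc]
    filter_upwards with x hx
    rw [Real.norm_eq_abs, abs_of_nonneg (hfnn x hx.1)]
    exact bound1 x hx
  have htaildom : IntegrableOn (fun g : ℝ => M * (1+J)^2 * ((g + 1 + J)^2)⁻¹) (Ioi (1:ℝ)) :=
    (tail_int j hj).1.const_mul _
  have hf2 : IntegrableOn f (Ioi (1:ℝ)) := by
    apply Integrable.mono' htaildom hsm2
    rw [ae_restrict_iff' measurableSet_Ioi]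
    filter_upwards with x hx
    rw [Real.norm_eq_abs, abs_of_nonneg (hfnn x (by linarith [mem_Ioi.1 hx]))]
    exact bound2 x hx
  have hsplit : (∫ g in Ioi (0:ℝ), f g)
      = (∫ g in Ioc (0:ℝ) 1, f g) + ∫ g in Ioi (1:ℝ), f g := by
    rw [← setIntegral_union Ioc_disjoint_Ioi_same measurableSet_Ioi hf1 hf2,
      Ioc_union_Ioi_eq_Ioi zero_le_one]
  have e1 : (∫ g in Ioc (0:ℝ) 1, f g) ≤ 1/(b+1) + 1/(b+2) := by
    rw [← (small_int b hb).2]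
    exact setIntegral_mono_on hf1 (small_int b hb).1 measurableSet_Ioc bound1
  have e2 : (∫ g in Ioi (1:ℝ), f g) ≤ M * (1+J)^2 * (2+J)⁻¹ := by
    have hv : (∫ g in Ioi (1:ℝ), M * (1+J)^2 * ((g + 1 + J)^2)⁻¹)
        = M * (1+J)^2 * (2+J)⁻¹ := by
      rw [integral_const_mul, (tail_int j hj).2]
    rw [← hv]
    exact setIntegral_mono_on hf2 htaildom measurableSet_Ioi bound2
  have key : 1/(b+2) ≤ 2/3 * M := by
    rw [div_le_iff₀ (show (0:ℝ) < b + 2 by linarith)]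
    rcases le_or_gt 0 b with hb0 | hb0
    · nlinarith
    · have hexp : 1 - b * Real.log 2 ≤ (2:ℝ) ^ (-b) := by
        rw [Real.rpow_def_of_pos (by norm_num : (0:ℝ) < 2)]
        have := Real.add_one_le_exp (Real.log 2 * (-b))
        linarith
      have hM2 : (2:ℝ) ^ (-b) ≤ M := le_max_right _ _
      have hL1 := Real.log_two_gt_d9
      have hL2 := Real.log_two_lt_d9
      have hb2 : (0:ℝ) ≤ (b+1) * (-b) := mul_nonneg (by linarith) (by linarith)
      nlinarith [mul_le_mul_of_nonneg_right (le_trans hexp hM2)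
        (show (0:ℝ) ≤ b + 2 by linarith)]
  have e3 : M * (1+J)^2 * (2+J)⁻¹ ≤ M * (1+J) - 2/3 * M := by
    rw [← div_eq_mul_inv, div_le_iff₀ (show (0:ℝ) < 2 + J by linarith)]
    nlinarith [mul_nonneg hM0 (show (0:ℝ) ≤ J - 1 by linarith)]
  calc (∫ g in Ioi (0:ℝ), f g)
      = (∫ g in Ioc (0:ℝ) 1, f g) + ∫ g in Ioi (1:ℝ), f g := hsplit
    _ ≤ (1/(b+1) + 1/(b+2)) + M * (1+J)^2 * (2+J)⁻¹ := add_le_add e1 e2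
    _ ≤ 1/(b+1) + M * (1+J) := by linarith
end

section
/- For every integer j ≥ 1, ∫_0^∞ (g+1)·k_j'(g)² dg ≤ 5/log(1+j), where k_j(g) = 1 - log(g+1)/log(g+1+j) and k_j' is its derivative. -/
open MeasureTheory Real Set Filter

/-- Its derivative `k_j'(g) = -(j/(g+1) + k_j(g)) / ((g+1+j) log(g+1+j))`. -/
noncomputable def kfun' (j : ℕ) (g : ℝ) : ℝ :=
  -((j : ℝ) / (g + 1) + kfun j g) / ((g + 1 + (j : ℝ)) * Real.log (g + 1 + (j : ℝ)))

/-- Auxiliary dominating function. -/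
noncomputable def fAux (r g : ℝ) : ℝ :=
  2 * r ^ 2 / (Real.log (1 + r)) ^ 2 * (1 / ((g + 1) * (g + 1 + r) ^ 2))
    + 2 / ((g + 1 + r) * (Real.log (g + 1 + r)) ^ 2)

/-- Antiderivative of `fAux r`. -/
noncomputable def FAux (r g : ℝ) : ℝ :=
  2 * r ^ 2 / (Real.log (1 + r)) ^ 2 *
      ((Real.log (g + 1) - Real.log (g + 1 + r)) / r ^ 2 + (r * (g + 1 + r))⁻¹)
    - 2 * (Real.log (g + 1 + r))⁻¹

lemma FAux_hasDerivAt (r : ℝ) (hr : 1 ≤ r) (g : ℝ) (hg : 0 ≤ g) :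
    HasDerivAt (FAux r) (fAux r g) g := by
  have hx : (0:ℝ) < g + 1 := by linarith
  have hu : (0:ℝ) < g + 1 + r := by linarith
  have hlu : 0 < Real.log (g + 1 + r) := Real.log_pos (by linarith)
  have h1 : HasDerivAt (fun y : ℝ => Real.log (y + 1)) (1 / (g + 1)) g := by
    simpa using ((hasDerivAt_id g).add_const 1).log (ne_of_gt hx)
  have hu' : HasDerivAt (fun y : ℝ => y + 1 + r) 1 g := by
    simpa using ((hasDerivAt_id g).add_const 1).add_const r
  have h2 : HasDerivAt (fun y : ℝ => Real.log (y + 1 + r)) (1 / (g + 1 + r)) g := by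
    simpa using hu'.log (ne_of_gt hu)
  have h3 : HasDerivAt (fun y : ℝ => (r * (y + 1 + r))⁻¹)
      (-(r * 1) / (r * (g + 1 + r)) ^ 2) g := (hu'.const_mul r).inv (by positivity)
  have h4 : HasDerivAt (fun y : ℝ => (Real.log (y + 1 + r))⁻¹)
      (-(1 / (g + 1 + r)) / (Real.log (g + 1 + r)) ^ 2) g := h2.inv (ne_of_gt hlu)
  have hA := (((h1.sub h2).div_const (r ^ 2)).add h3).const_mul
    (2 * r ^ 2 / (Real.log (1 + r)) ^ 2)
  have hcomb := hA.sub (h4.const_mul 2)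
  have hr0 : r ≠ 0 := by linarith
  refine hcomb.congr_deriv ?_
  have hlu' : Real.log (g + 1 + r) ≠ 0 := ne_of_gt hlu
  have hL' : Real.log (1 + r) ≠ 0 := ne_of_gt (Real.log_pos (by linarith))
  rw [fAux]
  field_simp
  ring

lemma FAux_tendsto (r : ℝ) (hr : 1 ≤ r) : Tendsto (FAux r) atTop (nhds 0) := by
  have hu : Tendsto (fun y : ℝ => y + 1 + r) atTop atTop :=
    tendsto_atTop_add_const_right _ r (tendsto_atTop_add_const_right _ 1 tendsto_id)
  have t2 : Tendsto (fun y : ℝ => (r * (y + 1 + r))⁻¹) atTop (nhds 0) :=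
    (hu.const_mul_atTop (by linarith : (0:ℝ) < r)).inv_tendsto_atTop
  have t3 : Tendsto (fun y : ℝ => (Real.log (y + 1 + r))⁻¹) atTop (nhds 0) :=
    (Real.tendsto_log_atTop.comp hu).inv_tendsto_atTop
  have t1 : Tendsto (fun y : ℝ => Real.log (y + 1) - Real.log (y + 1 + r)) atTop (nhds 0) := by
    have base : Tendsto (fun y : ℝ => 1 - r * (y + 1 + r)⁻¹) atTop (nhds 1) := by
      have := (hu.inv_tendsto_atTop).const_mul r
      simpa using (tendsto_const_nhds (x := (1:ℝ))).sub this
    have hlog : Tendsto (fun y : ℝ => Real.log (1 - r * (y + 1 + r)⁻¹)) atTop (nhds 0) := by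
      have := (Real.continuousAt_log one_ne_zero).tendsto.comp base
      simpa [Function.comp_def] using this
    refine hlog.congr' ?_
    filter_upwards [eventually_gt_atTop (0:ℝ)] with y hy
    have hx : (0:ℝ) < y + 1 := by linarith
    have hu0 : (0:ℝ) < y + 1 + r := by linarith
    have : 1 - r * (y + 1 + r)⁻¹ = (y + 1) / (y + 1 + r) := by
      field_simp
      ring
    rw [this, Real.log_div (ne_of_gt hx) (ne_of_gt hu0)]
  have key := (((t1.div_const (r ^ 2)).add t2).const_mul
      (2 * r ^ 2 / (Real.log (1 + r)) ^ 2)).sub (t3.const_mul 2)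
  have h0 : (2 * r ^ 2 / (Real.log (1 + r)) ^ 2 * ((0:ℝ) / r ^ 2 + 0) - 2 * 0 : ℝ) = 0 := by
    norm_num
  rw [h0] at key
  exact key

lemma fAux_nonneg (r : ℝ) (hr : 1 ≤ r) (g : ℝ) (hg : 0 ≤ g) : 0 ≤ fAux r g := by
  have hu : (0:ℝ) < g + 1 + r := by linarith
  have hlu : 0 < Real.log (g + 1 + r) := Real.log_pos (by linarith)
  have hx : (0:ℝ) < g + 1 := by linarith
  have hL : 0 < Real.log (1 + r) := Real.log_pos (by linarith)
  unfold fAux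
  positivity

/-- `∫_0^∞ (g+1) k_j'(g)² dg ≤ 5 / log(1+j)`. -/
theorem integral_kfun_deriv_sq (j : ℕ) (hj : 1 ≤ j) :
    (∫ g in Ioi (0 : ℝ), (g + 1) * (kfun' j g) ^ 2) ≤ 5 / Real.log (1 + (j : ℝ)) := by
  set r : ℝ := (j : ℝ) with hrdef
  have hr : (1:ℝ) ≤ r := by rw [hrdef]; exact_mod_cast hj
  have hL : 0 < Real.log (1 + r) := Real.log_pos (by linarith)
  set L := Real.log (1 + r) with hLdef
  -- basic facts used repeatedly
  have hderiv : ∀ x ∈ Ici (0:ℝ), HasDerivAt (FAux r) (fAux r x) x :=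
    fun x hx => FAux_hasDerivAt r hr x hx
  have hpos : ∀ x ∈ Ioi (0:ℝ), 0 ≤ fAux r x := fun x hx => fAux_nonneg r hr x (le_of_lt hx)
  have htend := FAux_tendsto r hr
  have hint : IntegrableOn (fAux r) (Ioi (0:ℝ)) :=
    integrableOn_Ioi_deriv_of_nonneg' hderiv hpos htend
  have hval : ∫ x in Ioi (0:ℝ), fAux r x = 0 - FAux r 0 :=
    integral_Ioi_of_hasDerivAt_of_nonneg' hderiv hpos htend
  -- pointwise bound
  have hbound : ∀ g ∈ Ioi (0:ℝ), (g + 1) * (kfun' j g) ^ 2 ≤ fAux r g := by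
    intro g hg
    have hg0 : (0:ℝ) < g := hg
    have hx : (1:ℝ) < g + 1 := by linarith
    have hx0 : (0:ℝ) < g + 1 := by linarith
    have hu : (0:ℝ) < g + 1 + r := by linarith
    have hxu : g + 1 ≤ g + 1 + r := by linarith
    have hlu : 0 < Real.log (g + 1 + r) := Real.log_pos (by linarith)
    have hLlu : L ≤ Real.log (g + 1 + r) := by
      rw [hLdef]
      exact Real.log_le_log (by linarith) (by linarith)
    have hk0 : 0 ≤ kfun j g := by
      have : Real.log (g + 1) ≤ Real.log (g + 1 + r) := Real.log_le_log hx0 hxu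
      have h := div_le_one_of_le₀ this (le_of_lt hlu)
      unfold kfun; rw [← hrdef]; linarith
    have hk1 : kfun j g ≤ 1 := by
      have hlx : 0 ≤ Real.log (g + 1) := Real.log_nonneg (by linarith)
      have : 0 ≤ Real.log (g + 1) / Real.log (g + 1 + r) := by positivity
      unfold kfun; rw [← hrdef]; linarith
    set lu := Real.log (g + 1 + r) with hludef
    set k := kfun j g with hkdef
    have hksq : k ^ 2 ≤ 1 := by nlinarith
    have hrw : (kfun' j g) ^ 2 = (r / (g + 1) + k) ^ 2 / ((g + 1 + r) * lu) ^ 2 := by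
      unfold kfun'
      rw [← hrdef, ← hkdef, ← hludef, div_pow, neg_sq]
    rw [hrw]
    have hA2 : (r / (g + 1) + k) ^ 2 ≤ 2 * (r / (g + 1)) ^ 2 + 2 := by
      nlinarith [sq_nonneg (r / (g + 1) - k)]
    have hB2 : (0:ℝ) < ((g + 1 + r) * lu) ^ 2 := by positivity
    have step1 : (g + 1) * ((r / (g + 1) + k) ^ 2 / ((g + 1 + r) * lu) ^ 2)
        ≤ (g + 1) * ((2 * (r / (g + 1)) ^ 2 + 2) / ((g + 1 + r) * lu) ^ 2) := by
      gcongr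
    have e1 : (g + 1) * ((2 * (r / (g + 1)) ^ 2 + 2) / ((g + 1 + r) * lu) ^ 2)
        = 2 * r ^ 2 / ((g + 1) * (g + 1 + r) ^ 2 * lu ^ 2)
          + 2 * (g + 1) / ((g + 1 + r) ^ 2 * lu ^ 2) := by
      field_simp
    have b1 : 2 * r ^ 2 / ((g + 1) * (g + 1 + r) ^ 2 * lu ^ 2)
        ≤ 2 * r ^ 2 / L ^ 2 * (1 / ((g + 1) * (g + 1 + r) ^ 2)) := by
      have e2 : 2 * r ^ 2 / L ^ 2 * (1 / ((g + 1) * (g + 1 + r) ^ 2))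
          = 2 * r ^ 2 / ((g + 1) * (g + 1 + r) ^ 2 * L ^ 2) := by
        field_simp
      rw [e2]
      gcongr
    have b2 : 2 * (g + 1) / ((g + 1 + r) ^ 2 * lu ^ 2) ≤ 2 / ((g + 1 + r) * lu ^ 2) := by
      have e3 : 2 / ((g + 1 + r) * lu ^ 2) = 2 * (g + 1 + r) / ((g + 1 + r) ^ 2 * lu ^ 2) := by
        field_simp
      rw [e3]
      gcongr
    calc (g + 1) * ((r / (g + 1) + k) ^ 2 / ((g + 1 + r) * lu) ^ 2)
        ≤ (g + 1) * ((2 * (r / (g + 1)) ^ 2 + 2) / ((g + 1 + r) * lu) ^ 2) := step1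
      _ = 2 * r ^ 2 / ((g + 1) * (g + 1 + r) ^ 2 * lu ^ 2)
          + 2 * (g + 1) / ((g + 1 + r) ^ 2 * lu ^ 2) := e1
      _ ≤ 2 * r ^ 2 / L ^ 2 * (1 / ((g + 1) * (g + 1 + r) ^ 2)) + 2 / ((g + 1 + r) * lu ^ 2) :=
          add_le_add b1 b2
      _ = fAux r g := by rw [fAux, ← hLdef, ← hludef]
  -- compare integrals
  have hmono : (∫ g in Ioi (0 : ℝ), (g + 1) * (kfun' j g) ^ 2) ≤ ∫ g in Ioi (0:ℝ), fAux r g := by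
    apply integral_mono_of_nonneg
    · refine (ae_restrict_iff' measurableSet_Ioi).2 (ae_of_all _ ?_)
      intro g hg
      have : (0:ℝ) < g + 1 := by have : (0:ℝ) < g := hg; linarith
      positivity
    · exact hint
    · exact (ae_restrict_iff' measurableSet_Ioi).2 (ae_of_all _ hbound)
  -- evaluate the right-hand side
  have hF0 : FAux r 0 = 2 * r ^ 2 / L ^ 2 * ((0 - L) / r ^ 2 + (r * (1 + r))⁻¹) - 2 * L⁻¹ := by
    rw [FAux]
    norm_num [← hLdef, Real.log_one]
  have hr0 : r ≠ 0 := by linarith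
  have hfin : 0 - FAux r 0 ≤ 5 / L := by
    rw [hF0]
    have hc : 2 * r ^ 2 / L ^ 2 * ((0 - L) / r ^ 2) = -(2 / L) := by
      field_simp
      ring
    have hnn : 0 ≤ 2 * r ^ 2 / L ^ 2 * (r * (1 + r))⁻¹ := by positivity
    have h45 : (4:ℝ) / L ≤ 5 / L := by gcongr <;> norm_num
    have e4 : 0 - (2 * r ^ 2 / L ^ 2 * ((0 - L) / r ^ 2 + (r * (1 + r))⁻¹) - 2 * L⁻¹)
        = 2 / L - 2 * r ^ 2 / L ^ 2 * (r * (1 + r))⁻¹ + 2 / L := by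
      rw [mul_add, hc]; ring
    rw [e4]
    have e5 : 2 / L + 2 / L = (4:ℝ) / L := by ring
    linarith
  calc (∫ g in Ioi (0 : ℝ), (g + 1) * (kfun' j g) ^ 2)
      ≤ ∫ g in Ioi (0:ℝ), fAux r g := hmono
    _ = 0 - FAux r 0 := hval
    _ ≤ 5 / L := hfin
end
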